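/- Let p ∈ [1, 2), α₀ ∈ (p, 2), and suppose σ² ≥ exp(1 + 2/p - log α₀ - ψ(1 - p/α₀)), where ψ is the digamma function. Then the function Λ(α) = (1/α)·(1/(α·σ²))^(p/α)·Γ(1 - p/α) is monotonically increasing on [α₀, 2), i.e., for α₀ ≤ α₁ < α₂ < 2 we have Λ(α₁) ≤ Λ(α₂). -/

import Mathlib

noncomputable def digamma (x : ℝ) : ℝ := deriv (fun y => Real.log (Real.Gamma y)) x

open Real Set

lemma loggamma_diff {x : ℝ} (hx : 0 < x) :
    DifferentiableAt ℝ (fun y => Real.log (Real.Gamma y)) x := by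
  refine (Real.differentiableAt_Gamma fun m => ?_).log (Real.Gamma_pos_of_pos hx).ne'
  exact ((neg_nonpos.mpr (Nat.cast_nonneg m)).trans_lt hx).ne'

lemma digamma_mono : MonotoneOn digamma (Set.Ioi (0:ℝ)) :=
  Real.convexOn_log_Gamma.monotoneOn_deriv (fun x hx => loggamma_diff hx)

theorem stmt_12 (p σ α₀ : ℝ) (hp1 : 1 ≤ p) (hp2 : p < 2) (hσ : 0 < σ)
    (hα₀ : α₀ ∈ Set.Ioo p 2)
    (hσ2 : σ ^ 2 ≥ Real.exp (1 + 2 / p - Real.log α₀ - digamma (1 - p / α₀)))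
    (α₁ α₂ : ℝ) (h1 : α₀ ≤ α₁) (h12 : α₁ < α₂) (h2 : α₂ < 2) :
    (1 / α₁) * (1 / (α₁ * σ ^ 2)) ^ (p / α₁) * Real.Gamma (1 - p / α₁)
      ≤ (1 / α₂) * (1 / (α₂ * σ ^ 2)) ^ (p / α₂) * Real.Gamma (1 - p / α₂) := by
  obtain ⟨hpα₀, hα₀2⟩ := hα₀
  have hp0 : (0:ℝ) < p := lt_of_lt_of_le one_pos hp1
  have hσ2pos : (0:ℝ) < σ ^ 2 := by positivity
  set f : ℝ → ℝ := fun α => -Real.log α - (p/α) * Real.log (α*σ^2)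
      + Real.log (Real.Gamma (1 - p/α)) with hf
  -- derivative computation on (p, 2)
  have key : ∀ α ∈ Set.Ioo p 2, HasDerivAt f
      (-α⁻¹ - ((p * -((α^2)⁻¹)) * Real.log (α*σ^2) + (p/α) * (1*σ^2/(α*σ^2)))
        + digamma (1 - p/α) * (0 - p * -((α^2)⁻¹))) α := by
    intro α hα
    have hαpos : 0 < α := lt_trans hp0 hα.1
    have hy : 0 < 1 - p/α := by
      have : p/α < 1 := (div_lt_one hαpos).mpr hα.1
      linarith
    have A : HasDerivAt (fun α : ℝ => Real.log α) α⁻¹ α := Real.hasDerivAt_log hαpos.ne'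
    have B : HasDerivAt (fun α : ℝ => p/α) (p * -((α^2)⁻¹)) α := by
      simpa [div_eq_mul_inv] using ((hasDerivAt_inv hαpos.ne').const_mul p)
    have C : HasDerivAt (fun α : ℝ => Real.log (α*σ^2)) (1*σ^2/(α*σ^2)) α :=
      ((hasDerivAt_id α).mul_const (σ^2)).log (by positivity)
    have D : HasDerivAt (fun α : ℝ => 1 - p/α) (0 - p * -((α^2)⁻¹)) α :=
      (hasDerivAt_const α (1:ℝ)).sub B
    have E : HasDerivAt (fun y : ℝ => Real.log (Real.Gamma y)) (digamma (1 - p/α)) (1 - p/α) :=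
      (loggamma_diff hy).hasDerivAt
    exact ((A.neg).sub (B.mul C)).add (show HasDerivAt ((fun y : ℝ => Real.log (Real.Gamma y)) ∘ fun α : ℝ => 1 - p/α) _ α from E.comp α D)
  -- the derivative is nonneg on Ioo α₀ 2
  have deriv_nonneg : ∀ α ∈ Set.Ioo α₀ 2, 0 ≤ deriv f α := by
    intro α hα
    have hαI : α ∈ Set.Ioo p 2 := ⟨lt_trans hpα₀ hα.1, hα.2⟩
    have hαpos : 0 < α := lt_trans hp0 hαI.1
    have hα₀pos : 0 < α₀ := lt_trans hp0 hpα₀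
    rw [(key α hαI).deriv]
    have hlogσ : 1 + 2 / p - Real.log α₀ - digamma (1 - p / α₀) ≤ Real.log (σ^2) :=
      (Real.le_log_iff_exp_le hσ2pos).mpr hσ2
    have hψ : digamma (1 - p/α₀) ≤ digamma (1 - p/α) := by
      have h0 : 0 < 1 - p/α₀ := by
        have : p/α₀ < 1 := (div_lt_one hα₀pos).mpr hpα₀
        linarith
      have h0' : 0 < 1 - p/α := by
        have : p/α < 1 := (div_lt_one hαpos).mpr hαI.1
        linarith
      refine digamma_mono h0 h0' ?_
      have : p/α ≤ p/α₀ := by gcongr; exact hα.1.le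
      linarith
    have hlogα : Real.log α₀ ≤ Real.log α := Real.log_le_log hα₀pos hα.1.le
    have hαp : α / p ≤ 2 / p := by gcongr; exact hα.2.le
    have hL : Real.log (α*σ^2) = Real.log α + Real.log (σ^2) :=
      Real.log_mul hαpos.ne' hσ2pos.ne'
    have hbracket : 0 ≤ Real.log α + Real.log (σ^2) - 1 - α/p + digamma (1 - p/α) := by
      linarith
    have hexp : -α⁻¹ - ((p * -((α^2)⁻¹)) * Real.log (α*σ^2) + (p/α) * (1*σ^2/(α*σ^2)))
        + digamma (1 - p/α) * (0 - p * -((α^2)⁻¹))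
        = (p / α^2) * (Real.log α + Real.log (σ^2) - 1 - α/p + digamma (1 - p/α)) := by
      rw [hL]; field_simp; ring
    rw [hexp]
    positivity
  -- Λ = exp ∘ f
  have hΛ : ∀ α ∈ Set.Ioo p 2,
      (1/α) * (1/(α*σ^2))^(p/α) * Real.Gamma (1 - p/α) = Real.exp (f α) := by
    intro α hα
    have hαpos : 0 < α := lt_trans hp0 hα.1
    have hy : 0 < 1 - p/α := by
      have : p/α < 1 := (div_lt_one hαpos).mpr hα.1
      linarith
    have e1 : Real.exp (-Real.log α) = 1/α := by
      rw [Real.exp_neg, Real.exp_log hαpos, one_div]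
    have e2 : Real.exp (-((p/α) * Real.log (α*σ^2))) = (1/(α*σ^2))^(p/α) := by
      rw [Real.rpow_def_of_pos (by positivity : (0:ℝ) < 1/(α*σ^2)), one_div, Real.log_inv]
      congr 1; ring
    have e3 : Real.exp (Real.log (Real.Gamma (1-p/α))) = Real.Gamma (1-p/α) :=
      Real.exp_log (Real.Gamma_pos_of_pos hy)
    have : f α = (-Real.log α) + (-((p/α) * Real.log (α*σ^2)))
        + Real.log (Real.Gamma (1-p/α)) := by
      simp only [hf]; ring
    rw [this, Real.exp_add, Real.exp_add, e1, e2, e3]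
  have hmem : ∀ x ∈ Set.Ico α₀ (2:ℝ), x ∈ Set.Ioo p 2 :=
    fun x hx => ⟨lt_of_lt_of_le hpα₀ hx.1, hx.2⟩
  have m : MonotoneOn f (Set.Ico α₀ 2) := by
    apply monotoneOn_of_deriv_nonneg (convex_Ico _ _)
    · exact fun x hx => ((key x (hmem x hx)).differentiableAt.continuousAt).continuousWithinAt
    · intro x hx
      rw [interior_Ico] at hx
      exact ((key x (hmem x (Set.Ioo_subset_Ico_self hx))).differentiableAt).differentiableWithinAt
    · intro x hx
      rw [interior_Ico] at hx
      exact deriv_nonneg x hx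
  have h1' : α₁ ∈ Set.Ico α₀ 2 := ⟨h1, lt_trans h12 h2⟩
  have h2' : α₂ ∈ Set.Ico α₀ 2 := ⟨le_trans h1 h12.le, h2⟩
  rw [hΛ α₁ (hmem α₁ h1'), hΛ α₂ (hmem α₂ h2')]
  exact Real.exp_le_exp.mpr (m h1' h2' h12.le)
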